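/- Let κ be an infinite cardinal with |PROP| ≥ κ, and let V_S be any class of pointed Routley–Meyer models with {(M,T) : M an RM-model} ⊆ V_S ⊆ {(M,T) : M a B-model}. If the infinitary relevant language L_{κω}→ is κ-compact with respect to V_S, then κ is a regular limit cardinal. -/

import Mathlib

universe u

/-- Formulas of the infinitary relevant language with absurdity `L_{∞ω}→` over
propositional variables `P`.  Conjunctions and disjunctions are indexed by
arbitrary (set-sized) index types. -/
inductive RelForm (P : Type u) : Type (u + 1)
  | atom : P → RelForm P
  | bot : RelForm P
  | neg : RelForm P → RelForm P
  | conj : (ι : Type u) → (ι → RelForm P) → RelForm P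
  | disj : (ι : Type u) → (ι → RelForm P) → RelForm P
  | imp : RelForm P → RelForm P → RelForm P

/-- A Routley–Meyer model. -/
structure RMModel (P : Type u) : Type (u + 1) where
  W : Type u
  nonempty : Nonempty W
  R : W → W → W → Prop
  star : W → W
  V : P → W → Prop

/-- Routley–Meyer satisfaction. -/
def RMModel.sat {P : Type u} (M : RMModel P) : M.W → RelForm P → Prop
  | w, .atom p => M.V p w
  | _, .bot => False
  | w, .neg φ => ¬ M.sat (M.star w) φ
  | w, .conj _ f => ∀ i, M.sat w (f i)
  | w, .disj _ f => ∃ i, M.sat w (f i)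
  | w, .imp φ ψ => ∀ a b, M.R w a b → M.sat a φ → M.sat b ψ

/-- The degree of an infinitary relevant formula. -/
noncomputable def RelForm.deg {P : Type u} : RelForm P → Ordinal.{u}
  | .atom _ => 0
  | .bot => 0
  | .neg φ => φ.deg
  | .conj _ f => ⨆ i, (f i).deg
  | .disj _ f => ⨆ i, (f i).deg
  | .imp φ ψ => max φ.deg ψ.deg + 1

/-- A formula lies in the fragment `L_{κω}→` : all its conjunctions and
disjunctions have index sets of cardinality `< κ`. -/
def RelForm.indexBound {P : Type u} (κ : Cardinal.{u}) : RelForm P → Prop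
  | .atom _ => True
  | .bot => True
  | .neg φ => φ.indexBound κ
  | .conj ι f => Cardinal.mk ι < κ ∧ ∀ i, (f i).indexBound κ
  | .disj ι f => Cardinal.mk ι < κ ∧ ∀ i, (f i).indexBound κ
  | .imp φ ψ => φ.indexBound κ ∧ ψ.indexBound κ

/-- The propositional variables occurring in a relevant formula. -/
def RelForm.props {P : Type u} : RelForm P → Set P
  | .atom p => {p}
  | .bot => ∅
  | .neg φ => φ.props
  | .conj _ f => ⋃ i, (f i).props
  | .disj _ f => ⋃ i, (f i).props
  | .imp φ ψ => φ.props ∪ ψ.props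

/-- The B-model frame/valuation conditions, for the pointed model `(M, T)`. -/
def IsBModel {P : Type u} (M : RMModel P) (T : M.W) : Prop :=
  (∀ x, M.R T x x) ∧
  (∀ x v y z, M.R T x v → M.R v y z → M.R x y z) ∧
  (∀ x, M.star (M.star x) = x) ∧
  (∀ x y, M.R T x y → M.R T (M.star y) (M.star x)) ∧
  (∀ p x y, M.V p x → M.R T x y → M.V p y)

/-- The RM-model conditions, for the pointed model `(M, T)`. -/
def IsRMModel {P : Type u} (M : RMModel P) (T : M.W) : Prop :=
  IsBModel M T ∧
  (∀ z x y, M.R z x y → M.R z (M.star y) (M.star x)) ∧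
  (∀ x y z v, (∃ u, M.R x y u ∧ M.R u z v) → (∃ u, M.R x u v ∧ M.R y z u)) ∧
  (∀ x, M.R x x x) ∧
  (∀ x y z, M.R x y z → M.R y x z) ∧
  (∀ x y z, M.R x y z → M.R T x z ∨ M.R T y z)

/-- A pointed model `(M, T)` is inconsistent if `p ∧ ~p` holds at `T`
for some propositional variable `p`. -/
def Inconsistent {P : Type u} (M : RMModel P) (T : M.W) : Prop :=
  ∃ p : P, M.sat T (.atom p) ∧ M.sat T (.neg (.atom p))

/-- A relevant directed bisimulation between `M₁` and `M₂` for the set `Q` of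
propositional variables. -/
structure IsRelDirectedBisim {P : Type u} (Q : Set P) (M₁ M₂ : RMModel P)
    (Z₁ : M₁.W → M₂.W → Prop) (Z₂ : M₂.W → M₁.W → Prop) : Prop where
  nonempty₁ : ∃ x y, Z₁ x y
  nonempty₂ : ∃ x y, Z₂ x y
  star₁ : ∀ x y, Z₁ x y → Z₂ (M₂.star y) (M₁.star x)
  star₂ : ∀ x y, Z₂ x y → Z₁ (M₁.star y) (M₂.star x)
  back₁ : ∀ x y b c, Z₁ x y → M₂.R y b c →
    ∃ b' c', M₁.R x b' c' ∧ Z₂ b b' ∧ Z₁ c' c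
  back₂ : ∀ x y b c, Z₂ x y → M₁.R y b c →
    ∃ b' c', M₂.R x b' c' ∧ Z₁ b b' ∧ Z₂ c' c
  atom₁ : ∀ x y, Z₁ x y → ∀ p ∈ Q, M₁.V p x → M₂.V p y
  atom₂ : ∀ x y, Z₂ x y → ∀ p ∈ Q, M₂.V p x → M₁.V p y

/-- A relevant directed α-bisimulation between `M₁` and `M₂` (for all
propositional variables): a system of pairs of nonempty relations
`⟨Z₁ β, Z₂ β⟩` for `β ≤ α`, decreasing in `β`. -/
structure IsRelDirectedAlphaBisim {P : Type u} (M₁ M₂ : RMModel P) (α : Ordinal.{u})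
    (Z₁ : Ordinal.{u} → M₁.W → M₂.W → Prop)
    (Z₂ : Ordinal.{u} → M₂.W → M₁.W → Prop) : Prop where
  nonempty₁ : ∀ β ≤ α, ∃ x y, Z₁ β x y
  nonempty₂ : ∀ β ≤ α, ∃ x y, Z₂ β x y
  anti₁ : ∀ β γ, β ≤ γ → γ ≤ α → ∀ x y, Z₁ γ x y → Z₁ β x y
  anti₂ : ∀ β γ, β ≤ γ → γ ≤ α → ∀ x y, Z₂ γ x y → Z₂ β x y
  star₁ : ∀ γ ≤ α, ∀ x y, Z₁ γ x y → Z₂ γ (M₂.star y) (M₁.star x)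
  star₂ : ∀ γ ≤ α, ∀ x y, Z₂ γ x y → Z₁ γ (M₁.star y) (M₂.star x)
  back₁ : ∀ β < α, ∀ x y, Z₁ (Order.succ β) x y → ∀ b c, M₂.R y b c →
    ∃ b' c', M₁.R x b' c' ∧ Z₂ β b b' ∧ Z₁ β c' c
  back₂ : ∀ β < α, ∀ x y, Z₂ (Order.succ β) x y → ∀ b c, M₁.R y b c →
    ∃ b' c', M₂.R x b' c' ∧ Z₁ β b b' ∧ Z₂ β c' c
  atom₁ : ∀ γ ≤ α, ∀ x y, Z₁ γ x y → ∀ p, M₁.V p x → M₂.V p y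
  atom₂ : ∀ γ ≤ α, ∀ x y, Z₂ γ x y → ∀ p, M₂.V p x → M₁.V p y

/-! ### The correspondence language `L_{∞ω}^{corr}` -/

/-- Terms of the correspondence language: variables and the Routley star. -/
inductive CTerm : Type
  | var : ℕ → CTerm
  | star : CTerm → CTerm

/-- Formulas of the classical infinitary correspondence language, over the
signature with the ternary relation `R`, the unary function `*` and one unary
predicate for each element of `P`. -/
inductive CForm (P : Type u) : Type (u + 1)
  | rel : CTerm → CTerm → CTerm → CForm P
  | prop : P → CTerm → CForm P
  | not : CForm P → CForm P
  | and : CForm P → CForm P → CForm P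
  | imp : CForm P → CForm P → CForm P
  | conj : (ι : Type u) → (ι → CForm P) → CForm P
  | disj : (ι : Type u) → (ι → CForm P) → CForm P
  | all : ℕ → CForm P → CForm P
  | ex : ℕ → CForm P → CForm P

/-- Evaluation of terms in a Routley–Meyer model, read as a classical
structure. -/
def CTerm.eval {P : Type u} (M : RMModel P) (v : ℕ → M.W) : CTerm → M.W
  | .var n => v n
  | .star t => M.star (t.eval M v)

/-- Classical (Tarskian) satisfaction for the correspondence language. -/
def CForm.Sat {P : Type u} (M : RMModel P) : (ℕ → M.W) → CForm P → Prop
  | v, .rel t₁ t₂ t₃ => M.R (t₁.eval M v) (t₂.eval M v) (t₃.eval M v)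
  | v, .prop p t => M.V p (t.eval M v)
  | v, .not φ => ¬ CForm.Sat M v φ
  | v, .and φ ψ => CForm.Sat M v φ ∧ CForm.Sat M v ψ
  | v, .imp φ ψ => CForm.Sat M v φ → CForm.Sat M v ψ
  | v, .conj _ f => ∀ i, CForm.Sat M v (f i)
  | v, .disj _ f => ∃ i, CForm.Sat M v (f i)
  | v, .all n φ => ∀ a : M.W, CForm.Sat M (Function.update v n a) φ
  | v, .ex n φ => ∃ a : M.W, CForm.Sat M (Function.update v n a) φ

/-- The predicates (corresponding to propositional variables) occurring in a
correspondence-language formula. -/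
def CForm.props {P : Type u} : CForm P → Set P
  | .rel _ _ _ => ∅
  | .prop p _ => {p}
  | .not φ => φ.props
  | .and φ ψ => φ.props ∪ ψ.props
  | .imp φ ψ => φ.props ∪ ψ.props
  | .conj _ f => ⋃ i, (f i).props
  | .disj _ f => ⋃ i, (f i).props
  | .all _ φ => φ.props
  | .ex _ φ => φ.props

/-- Auxiliary standard translation `T_x(φ)^{t/x}`: the parameter `n` is a
supply of fresh variables (all variables of `t` are `< n`). -/
def stAux {P : Type u} : ℕ → CTerm → RelForm P → CForm P
  | _, t, .bot => .and (.not (.rel t t t)) (.rel t t t)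
  | _, t, .atom p => .prop p t
  | n, t, .neg φ => .not (stAux n (.star t) φ)
  | n, t, .conj ι f => .conj ι fun i => stAux n t (f i)
  | n, t, .disj ι f => .disj ι fun i => stAux n t (f i)
  | n, t, .imp φ ψ =>
      .all n (.all (n + 1)
        (.imp (.and (.rel t (.var n) (.var (n + 1))) (stAux (n + 2) (.var n) φ))
          (stAux (n + 2) (.var (n + 1)) ψ)))

/-- The standard translation `T_x(φ)` with free variable `x = var 0`. -/
def stT {P : Type u} (φ : RelForm P) : CForm P := stAux 1 (.var 0) φ

/-- Satisfaction of a correspondence-language formula with one free variable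
`x = var 0` at the element `w`. -/
def CForm.SatAt {P : Type u} (φ : CForm P) (M : RMModel P) (w : M.W) : Prop :=
  CForm.Sat M (fun _ => w) φ

/-- Expansion of a model by interpretations of extra predicates. -/
def RMModel.expand {P Q : Type u} (M : RMModel P) (I : Q → M.W → Prop) :
    RMModel (P ⊕ Q) :=
  { W := M.W, nonempty := M.nonempty, R := M.R, star := M.star,
    V := Sum.elim M.V I }

/-- A `Σ¹₁` formula over the correspondence language: second-order existential
quantification over a family of extra predicates, in front of a formula. -/
structure Sigma11Form (P : Type u) : Type (u + 1) where
  preds : Type u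
  matrix : CForm (P ⊕ preds)

/-- A `Π¹₁` formula over the correspondence language. -/
structure Pi11Form (P : Type u) : Type (u + 1) where
  preds : Type u
  matrix : CForm (P ⊕ preds)

/-- Satisfaction of a `Σ¹₁` formula (one free variable) at a point. -/
def Sigma11Form.SatAt {P : Type u} (φ : Sigma11Form P) (M : RMModel P)
    (w : M.W) : Prop :=
  ∃ I : φ.preds → M.W → Prop, CForm.Sat (M.expand I) (fun _ => w) φ.matrix

/-- Satisfaction of a `Π¹₁` formula (one free variable) at a point. -/
def Pi11Form.SatAt {P : Type u} (φ : Pi11Form P) (M : RMModel P)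
    (w : M.W) : Prop :=
  ∀ I : φ.preds → M.W → Prop, CForm.Sat (M.expand I) (fun _ => w) φ.matrix

/-- Propositional-variable predicates occurring in a `Σ¹₁` formula. -/
def Sigma11Form.props {P : Type u} (φ : Sigma11Form P) : Set P :=
  {p : P | Sum.inl p ∈ φ.matrix.props}

/-- Propositional-variable predicates occurring in a `Π¹₁` formula. -/
def Pi11Form.props {P : Type u} (φ : Pi11Form P) : Set P :=
  {p : P | Sum.inl p ∈ φ.matrix.props}

/-- `A` implies `B` along relevant directed bisimulations for `Q` over the
class `K`. -/
def ImpliesAlong {P : Type u} (K : RMModel P → Prop) (Q : Set P)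
    (A B : (M : RMModel P) → M.W → Prop) : Prop :=
  ∀ M₁ M₂ : RMModel P, K M₁ → K M₂ →
    ∀ (Z₁ : M₁.W → M₂.W → Prop) (Z₂ : M₂.W → M₁.W → Prop),
      IsRelDirectedBisim Q M₁ M₂ Z₁ Z₂ →
        (∀ a b, Z₁ a b → A M₁ a → B M₂ b) ∧ (∀ a b, Z₂ a b → A M₂ a → B M₁ b)

/-- A Hilbert-style formal system for `L_{κ⁺ω}→`: a set of axioms, and a set of
rules each with fewer than `κ⁺` premises. -/
structure HilbertSystem (P : Type u) (κ : Cardinal.{u}) : Type (u + 1) where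
  Axioms : Set (RelForm P)
  Rules : Set ((ι : Type u) × (ι → RelForm P) × RelForm P)
  rules_small : ∀ r ∈ Rules, Cardinal.mk r.1 < Order.succ κ

/-- `Γ ⊢_H φ`: there is a sequence of formulas of length `< κ⁺`, each member of
which is an axiom, a member of `Γ`, or follows from previous members by a rule,
with `φ` occurring (as its last member). -/
def HilbertSystem.Proves {P : Type u} {κ : Cardinal.{u}} (H : HilbertSystem P κ)
    (Γ : Set (RelForm P)) (φ : RelForm P) : Prop :=
  ∃ (δ : Ordinal.{u}) (s : ∀ γ : Ordinal.{u}, γ < δ → RelForm P),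
    δ.card < Order.succ κ ∧
    (∀ γ (hγ : γ < δ),
      s γ hγ ∈ H.Axioms ∨ s γ hγ ∈ Γ ∨
      ∃ r ∈ H.Rules, r.2.2 = s γ hγ ∧
        ∀ i : r.1, ∃ γ', ∃ hlt : γ' < γ, s γ' (hlt.trans hγ) = r.2.1 i) ∧
    ∃ γ, ∃ hγ : γ < δ, s γ hγ = φ

/-- The formula `⋁_{p ∈ PROP} (p ∧ ~p)` expressing inconsistency. -/
def inconsistencyFormula (P : Type u) : RelForm P :=
  .disj P fun p =>
    .conj (ULift.{u} Bool) fun b => bif b.down then .atom p else .neg (.atom p)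


/-! ### Auxiliary constructions for the proof -/

/-- The one-world Routley–Meyer model determined by a classical valuation. -/
def OneWorld {P : Type u} (v : P → Prop) : RMModel P where
  W := PUnit
  nonempty := ⟨⟨⟩⟩
  R _ _ _ := True
  star := id
  V p _ := v p

theorem oneWorld_isRM {P : Type u} (v : P → Prop) :
    IsRMModel (OneWorld v) PUnit.unit :=
  ⟨⟨fun _ => trivial, fun _ _ _ _ _ _ => trivial, fun _ => rfl,
    fun _ _ _ => trivial, fun _ _ _ hv _ => hv⟩,
    fun _ _ _ _ => trivial, fun _ _ _ _ _ => ⟨⟨⟩, trivial, trivial⟩,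
    fun _ => trivial, fun _ _ _ _ => trivial, fun _ _ _ _ => Or.inl trivial⟩

theorem card_pre_lt {P : Type u} {κ : Cardinal.{u}} {A : Type u} {g : A → RelForm P}
    (hg : Function.Injective g) {Φ₀ : Set (RelForm P)}
    (h : Cardinal.mk Φ₀ < Cardinal.lift.{u + 1} κ) :
    Cardinal.mk {a : A // g a ∈ Φ₀} < κ := by
  have hemb : Nonempty ({a : A // g a ∈ Φ₀} ↪ Φ₀) :=
    ⟨⟨fun a => ⟨g a.1, a.2⟩, fun a b hab => Subtype.ext (hg (congrArg Subtype.val hab))⟩⟩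
  have h1 : Cardinal.lift.{u + 1} (Cardinal.mk {a : A // g a ∈ Φ₀}) ≤
      Cardinal.lift.{u} (Cardinal.mk Φ₀) := Cardinal.lift_mk_le'.mpr hemb
  rw [Cardinal.lift_id'.{u, u + 1}] at h1
  exact Cardinal.lift_lt.mp (h1.trans_lt h)

/-- Let `κ` be an infinite cardinal with `|PROP| ≥ κ` and let
`V_S` lie between the RM-models and the B-models.  If `L_{κω}→` is `κ`-compact
with respect to `V_S`, then `κ` is a regular limit cardinal. -/
theorem kappa_compact_implies_regular_limit {P : Type u} (κ : Cardinal.{u})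
    (hκ : Cardinal.aleph0.{u} ≤ κ) (hP : κ ≤ Cardinal.mk P)
    (VS : ∀ M : RMModel P, M.W → Prop)
    (hRM : ∀ (M : RMModel P) (T : M.W), IsRMModel M T → VS M T)
    (hB : ∀ (M : RMModel P) (T : M.W), VS M T → IsBModel M T)
    (hcompact : ∀ Φ Ψ : Set (RelForm P),
      (∀ φ ∈ Φ, φ.indexBound κ) → (∀ ψ ∈ Ψ, ψ.indexBound κ) →
      (∀ Φ₀ Ψ₀ : Set (RelForm P), Φ₀ ⊆ Φ → Ψ₀ ⊆ Ψ →
        Cardinal.mk Φ₀ < Cardinal.lift.{u + 1} κ →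
        Cardinal.mk Ψ₀ < Cardinal.lift.{u + 1} κ →
        ∃ (M : RMModel P) (T : M.W), VS M T ∧
          (∀ φ ∈ Φ₀, M.sat T φ) ∧ (∀ ψ ∈ Ψ₀, ¬ M.sat T ψ)) →
      ∃ (M : RMModel P) (T : M.W), VS M T ∧
        (∀ φ ∈ Φ, M.sat T φ) ∧ (∀ ψ ∈ Ψ, ¬ M.sat T ψ)) :
    κ.IsRegular ∧ ∀ μ : Cardinal.{u}, μ < κ → Order.succ μ < κ := by
  have hreg : κ.IsRegular := by
    refine ⟨hκ, ?_⟩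
    by_contra hcof
    push_neg at hcof
    obtain ⟨e⟩ : Nonempty (κ.ord.ToType ↪ P) := by
      rw [← Cardinal.le_def, Cardinal.mk_toType, Cardinal.card_ord]; exact hP
    obtain ⟨S, hSub, hScard⟩ :=
      Order.exists_cof_eq κ.ord.ToType
    rw [Ordinal.cof_toType] at hScard
    let Φ : Set (RelForm P) :=
      Set.range (fun x : κ.ord.ToType => RelForm.atom (e x))
    let χ : RelForm P :=
      .conj ↥S (fun s => .conj ↥(Set.Iic s.1) (fun x => .atom (e x.1)))
    have hIic : ∀ s : κ.ord.ToType, Cardinal.mk ↥(Set.Iic s) < κ := by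
      intro s
      rw [← Set.Iio_insert]
      exact Cardinal.mk_insert_le.trans_lt
        (Cardinal.add_lt_of_lt hκ (Cardinal.mk_Iio_ord_toType s)
          (Cardinal.one_lt_aleph0.trans_le hκ))
    have hinj : Function.Injective (fun x : κ.ord.ToType => RelForm.atom (e x)) := by
      intro a b hab
      apply e.injective
      injection hab
    obtain ⟨M, T, -, hΦsat, hΨsat⟩ := hcompact Φ {χ}
      (fun φ hφ => by obtain ⟨x, rfl⟩ := hφ; trivial)
      (fun ψ hψ => by
        rw [Set.mem_singleton_iff] at hψ; subst hψ
        exact ⟨by rw [hScard]; exact hcof, fun s => ⟨hIic s.1, fun x => trivial⟩⟩)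
      (by
        intro Φ₀ Ψ₀ hΦ₀ hΨ₀ hc1 _
        obtain ⟨x₀, hx₀⟩ : ∃ x₀, RelForm.atom (e x₀) ∉ Φ₀ := by
          by_contra hall
          push_neg at hall
          have h1 : Cardinal.mk {x : κ.ord.ToType // RelForm.atom (e x) ∈ Φ₀} < κ :=
            card_pre_lt hinj hc1
          have h2 : Cardinal.mk {x : κ.ord.ToType // RelForm.atom (e x) ∈ Φ₀} = κ := by
            rw [Cardinal.mk_congr (Equiv.subtypeUnivEquiv hall), Cardinal.mk_toType,
              Cardinal.card_ord]
          rw [h2] at h1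
          exact lt_irrefl κ h1
        refine ⟨OneWorld (fun p => p ≠ e x₀), PUnit.unit,
          hRM _ _ (oneWorld_isRM _), ?_, ?_⟩
        · intro φ hφ
          obtain ⟨x, rfl⟩ := hΦ₀ hφ
          intro hEq
          exact hx₀ (by rwa [← hEq])
        · intro ψ hψ
          rw [Set.mem_singleton_iff.mp (hΨ₀ hψ)]
          intro hsat
          obtain ⟨s, hs, hles⟩ := hSub x₀
          exact hsat ⟨s, hs⟩ ⟨x₀, hles⟩ rfl)
    exact hΨsat χ rfl (fun s x => hΦsat _ ⟨x.1, rfl⟩)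
  refine ⟨hreg, ?_⟩
  intro μ hμ
  refine lt_of_le_of_ne (Order.succ_le_of_lt hμ) ?_
  intro hEq
  have hμinf : Cardinal.aleph0 ≤ μ := by
    by_contra hfin
    push_neg at hfin
    obtain ⟨n, rfl⟩ := Cardinal.lt_aleph0.mp hfin
    rw [← hEq, Cardinal.succ_natCast] at hκ
    have h2 : ((n : Cardinal) + 1) < Cardinal.aleph0 := by
      rw [← Nat.cast_succ]
      exact Cardinal.nat_lt_aleph0 (n + 1)
    exact absurd hκ (not_le.mpr h2)
  obtain ⟨β₀⟩ : Nonempty μ.out := by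
    refine Cardinal.mk_ne_zero_iff.mp ?_
    rw [Cardinal.mk_out]
    exact (Cardinal.aleph0_pos.trans_le hμinf).ne'
  obtain ⟨e⟩ : Nonempty (κ.out × μ.out ↪ P) := by
    rw [← Cardinal.le_def, Cardinal.mk_prod, Cardinal.lift_id, Cardinal.lift_id,
      Cardinal.mk_out, Cardinal.mk_out]
    exact le_trans (le_trans (mul_le_mul_right hμ.le κ) (Cardinal.mul_eq_self hκ).le) hP
  let dF : κ.out → RelForm P := fun α => .disj μ.out (fun β => .atom (e (α, β)))
  let pF : κ.out → κ.out → μ.out → RelForm P := fun α α' β =>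
    .conj (ULift Bool) (fun b => .atom (e (if b.down then α else α', β)))
  let Φ : Set (RelForm P) := Set.range dF
  let Ψ : Set (RelForm P) := {ψ | ∃ α α' β, α ≠ α' ∧ ψ = pF α α' β}
  have hdFinj : Function.Injective dF := by
    intro α α' hαα
    have hαα' : RelForm.disj μ.out (fun β => RelForm.atom (e (α, β))) =
        RelForm.disj μ.out (fun β => RelForm.atom (e (α', β))) := hαα
    injection hαα' with h1 h2
    have h3 : RelForm.atom (e (α, β₀)) = RelForm.atom (e (α', β₀)) := congrFun h2 β₀
    have h4 : e (α, β₀) = e (α', β₀) := by injection h3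
    injection e.injective h4 with h5 h6
  obtain ⟨M, T, -, hΦsat, hΨsat⟩ := hcompact Φ Ψ
    (fun φ hφ => by
      obtain ⟨α, rfl⟩ := hφ
      exact ⟨by rw [Cardinal.mk_out]; exact hμ, fun β => trivial⟩)
    (fun ψ hψ => by
      obtain ⟨α, α', β, hne, rfl⟩ := hψ
      exact ⟨(Cardinal.lt_aleph0_of_finite _).trans_le hκ, fun b => trivial⟩)
    (by
      intro Φ₀ Ψ₀ hΦ₀ hΨ₀ hc1 _
      have hA₀ : Cardinal.mk {α : κ.out // dF α ∈ Φ₀} < κ := card_pre_lt hdFinj hc1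
      obtain ⟨c⟩ : Nonempty ({α : κ.out // dF α ∈ Φ₀} ↪ μ.out) := by
        rw [← Cardinal.le_def, Cardinal.mk_out]
        exact Order.lt_succ_iff.mp (lt_of_lt_of_eq hA₀ hEq.symm)
      refine ⟨OneWorld (fun p => ∃ a : {α : κ.out // dF α ∈ Φ₀}, p = e (a.1, c a)),
        PUnit.unit, hRM _ _ (oneWorld_isRM _), ?_, ?_⟩
      · intro φ hφ
        obtain ⟨α, rfl⟩ := hΦ₀ hφ
        exact ⟨c ⟨α, hφ⟩, ⟨⟨α, hφ⟩, rfl⟩⟩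
      · intro ψ hψ
        obtain ⟨α, α', β, hne, rfl⟩ := hΨ₀ hψ
        intro hsat
        have h1 : ∃ a : {γ : κ.out // dF γ ∈ Φ₀}, e (α, β) = e (a.1, c a) := hsat ⟨true⟩
        have h2 : ∃ a : {γ : κ.out // dF γ ∈ Φ₀}, e (α', β) = e (a.1, c a) := hsat ⟨false⟩
        obtain ⟨a, ha⟩ := h1
        obtain ⟨a', ha'⟩ := h2
        injection e.injective ha with hα hβ
        injection e.injective ha' with hα' hβ'
        have haa : a = a' := c.injective (hβ.symm.trans hβ')
        exact hne (by rw [hα, hα', haa]))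
  have hdis : ∀ α : κ.out, ∃ β : μ.out, M.sat T (.atom (e (α, β))) :=
    fun α => hΦsat (dF α) ⟨α, rfl⟩
  choose f hf using hdis
  have hninj : ¬ Function.Injective f := by
    intro hinj
    have h1 := Cardinal.mk_le_of_injective hinj
    rw [Cardinal.mk_out, Cardinal.mk_out] at h1
    exact absurd h1 (not_le.mpr hμ)
  obtain ⟨α, α', hfeq, hne⟩ := Function.not_injective_iff.mp hninj
  refine hΨsat (pF α α' (f α)) ⟨α, α', f α, hne, rfl⟩ ?_
  intro b
  rcases b with ⟨b⟩
  cases b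
  · show M.sat T (.atom (e (α', f α)))
    rw [hfeq]
    exact hf α'
  · exact hf α
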